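/- Let (a_n)_{n≥1} satisfy 0 < α ≤ a_n ≤ M; for each n let f_n : ℝ → ℝ be C¹ and convex with |f_n(t)| ≤ β_n(1+t²), (β_n) ∈ s, and f_n(t) ≥ −γ_n with γ_n ≥ 0, Σ γ_n < ∞, and let F(x) = (1/2) Σ a_n x_n² + Σ f_n(x_n) on s. Let (x^{(j)})_{j∈ℕ} be a sequence in s such that (F(x^{(j)}))_j is bounded and such that, setting g_n^{(j)} := a_n x_n^{(j)} + f_n'(x_n^{(j)}), for every k ∈ ℕ the weighted sums Σ_{n=1}^∞ (g_n^{(j)})² n^{2k} are bounded uniformly in j. Then (x^{(j)}) is bounded in s: for every k ∈ ℕ, sup_j ‖x^{(j)}‖_k = sup_j sup_n |x_n^{(j)}| n^k < ∞. -/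

import Mathlib

/-- The space `s` of rapidly decreasing sequences (indexed so that `x n` represents the
`(n+1)`-st term of the paper's sequence `(x_n)_{n ≥ 1}`). -/
def InS (x : ℕ → ℝ) : Prop :=
  ∀ k : ℕ, ∃ C : ℝ, ∀ n : ℕ, |x n| * ((n : ℝ) + 1) ^ k ≤ C

/-- The `𝓕ₛ`-functional `F(x) = (1/2) Σ a_n x_n² + Σ f_n(x_n)`. -/
noncomputable def Ffun (a : ℕ → ℝ) (f : ℕ → ℝ → ℝ) (x : ℕ → ℝ) : ℝ :=
  (1 / 2) * ∑' n : ℕ, a n * x n ^ 2 + ∑' n : ℕ, f n (x n)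

/-- under the `𝓕ₛ` conditions, if `(x⁽ʲ⁾) ⊆ s` has `(F(x⁽ʲ⁾))` bounded and
the weighted sums `Σ (g_n⁽ʲ⁾)² n^{2k}` (with `g_n⁽ʲ⁾ = a_n x_n⁽ʲ⁾ + f_n'(x_n⁽ʲ⁾)`) are
bounded uniformly in `j` for each `k`, then `(x⁽ʲ⁾)` is bounded in `s`: for every `k`,
`sup_j sup_n |x_n⁽ʲ⁾| n^k < ∞`. -/
lemma sumInv : Summable (fun n : ℕ => 1 / ((n : ℝ) + 1) ^ 2) := by
  have h := (summable_nat_add_iff 1).2 (Real.summable_one_div_nat_pow.2 (by norm_num : 1 < 2))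
  exact h.congr (by intro n; push_cast; ring)

lemma deriv_bound {f : ℝ → ℝ} {β : ℝ} (hC1 : ContDiff ℝ 1 f)
    (hconv : ConvexOn ℝ Set.univ f) (hg : ∀ t, |f t| ≤ β * (1 + t ^ 2)) (x : ℝ) :
    |deriv f x| ≤ 5 * β * (1 + x ^ 2) := by
  have hd : DifferentiableAt ℝ f x := (hC1.differentiable one_ne_zero).differentiableAt
  have hβ0 : 0 ≤ β := by have := hg 0; have := abs_nonneg (f 0); nlinarith
  have h1 : deriv f x ≤ slope f x (x + 1) :=
    hconv.deriv_le_slope (Set.mem_univ x) (Set.mem_univ (x + 1)) (by linarith) hd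
  have h2 : slope f (x - 1) x ≤ deriv f x :=
    hconv.slope_le_deriv (Set.mem_univ (x - 1)) (Set.mem_univ x) (by linarith) hd
  have e1 : slope f x (x + 1) = f (x + 1) - f x := by simp [slope_def_field]
  have e2 : slope f (x - 1) x = f x - f (x - 1) := by simp [slope_def_field]
  rw [e1] at h1; rw [e2] at h2
  have b1 := abs_le.1 (hg (x + 1))
  have b2 := abs_le.1 (hg x)
  have b3 := abs_le.1 (hg (x - 1))
  rw [abs_le]
  constructor <;> nlinarith [sq_nonneg (x - 1), sq_nonneg (x + 1), sq_nonneg x]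

theorem stmt_9 (a β γ : ℕ → ℝ) (α M : ℝ) (f : ℕ → ℝ → ℝ)
    (hα : 0 < α) (ha : ∀ n, α ≤ a n ∧ a n ≤ M)
    (hC1 : ∀ n, ContDiff ℝ 1 (f n)) (hconv : ∀ n, ConvexOn ℝ Set.univ (f n))
    (hgrowth : ∀ n t, |f n t| ≤ β n * (1 + t ^ 2)) (hβ : InS β)
    (hγ0 : ∀ n, 0 ≤ γ n) (hγ : Summable γ) (hlb : ∀ n t, -γ n ≤ f n t)
    (xj : ℕ → ℕ → ℝ) (hxj : ∀ j, InS (xj j))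
    (hFbdd : ∃ B : ℝ, ∀ j, |Ffun a f (xj j)| ≤ B)
    (hgbdd : ∀ k : ℕ, ∃ B : ℝ, ∀ j : ℕ,
      ∑' n : ℕ, (a n * xj j n + deriv (f n) (xj j n)) ^ 2 * ((n : ℝ) + 1) ^ (2 * k) ≤ B) :
    ∀ k : ℕ, ∃ B : ℝ, ∀ j n : ℕ, |xj j n| * ((n : ℝ) + 1) ^ k ≤ B := by
  have hβ0 : ∀ n, 0 ≤ β n := fun n => by
    have := hgrowth n 0; have := abs_nonneg (f n 0); nlinarith
  have hM0 : 0 < M := lt_of_lt_of_le hα (le_trans (ha 0).1 (ha 0).2)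
  -- β is summable
  obtain ⟨D2, hD2⟩ := hβ 2
  have hD2' : ∀ n, β n * ((n : ℝ) + 1) ^ 2 ≤ D2 := fun n => by
    have := hD2 n; rwa [abs_of_nonneg (hβ0 n)] at this
  have hβsum : Summable β := by
    refine Summable.of_nonneg_of_le hβ0 (fun n => ?_) (sumInv.mul_left D2)
    have hp : (0:ℝ) < ((n:ℝ)+1)^2 := by positivity
    rw [mul_one_div, le_div_iff₀ hp]
    exact hD2' n
  -- uniform ℓ² bound from F-boundedness
  obtain ⟨B, hB⟩ := hFbdd
  set G := ∑' n, γ n with hG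
  have hG0 : 0 ≤ G := tsum_nonneg hγ0
  have hKbd : ∀ j n, α * (xj j n)^2 ≤ 2*(B + G) := by
    intro j n
    obtain ⟨C0, hC0⟩ := hxj j 0
    have hC0' : ∀ m, |xj j m| ≤ C0 := fun m => by simpa using hC0 m
    obtain ⟨C2, hC2⟩ := hxj j 2
    have hx2 : ∀ m, (xj j m)^2 ≤ C0*C2 * (1/((m:ℝ)+1)^2) := by
      intro m
      have h1 := hC0' m
      have h2 := hC2 m
      have hp : (0:ℝ) < ((m:ℝ)+1)^2 := by positivity
      rw [mul_one_div, le_div_iff₀ hp]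
      calc (xj j m)^2 * ((m:ℝ)+1)^2 = |xj j m| * (|xj j m| * ((m:ℝ)+1)^2) := by
            rw [← sq_abs]; ring
        _ ≤ C0 * C2 := mul_le_mul h1 h2 (by positivity) (le_trans (abs_nonneg _) h1)
    have hsumx2 : Summable (fun m => (xj j m)^2) :=
      Summable.of_nonneg_of_le (fun m => sq_nonneg _) hx2 (sumInv.mul_left _)
    have hsum1 : Summable (fun m => a m * (xj j m)^2) := by
      refine Summable.of_nonneg_of_le
        (fun m => mul_nonneg (le_of_lt (lt_of_lt_of_le hα (ha m).1)) (sq_nonneg _))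
        (fun m => mul_le_mul_of_nonneg_right (ha m).2 (sq_nonneg _)) (hsumx2.mul_left M)
    have hsum2abs : Summable (fun m => |f m (xj j m)|) := by
      refine Summable.of_nonneg_of_le (fun m => abs_nonneg _) (fun m => ?_)
        (hβsum.mul_right (1 + C0^2))
      calc |f m (xj j m)| ≤ β m * (1 + (xj j m)^2) := hgrowth m _
        _ ≤ β m * (1 + C0^2) := by
            refine mul_le_mul_of_nonneg_left ?_ (hβ0 m)
            have h1 := hC0' m
            nlinarith [abs_nonneg (xj j m), sq_abs (xj j m)]
    have hsum2 := hsum2abs.of_abs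
    have hS2 : -G ≤ ∑' m, f m (xj j m) := by
      rw [hG, ← tsum_neg]
      exact Summable.tsum_le_tsum (fun m => hlb m _) hγ.neg hsum2
    have hterm : a n * (xj j n)^2 ≤ ∑' m, a m * xj j m ^2 :=
      Summable.le_tsum hsum1 n (fun m _ =>
        mul_nonneg (le_of_lt (lt_of_lt_of_le hα (ha m).1)) (sq_nonneg _))
    have hBj : |1 / 2 * ∑' (n : ℕ), a n * xj j n ^ 2 + ∑' (n : ℕ), f n (xj j n)| ≤ B := hB j
    have hFb := abs_le.1 hBj
    have haxx : α * (xj j n)^2 ≤ a n * (xj j n)^2 :=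
      mul_le_mul_of_nonneg_right (ha n).1 (sq_nonneg _)
    linarith [hFb.1, hFb.2]
  set K := 2*(B + G)/α with hKdef
  have hK2 : ∀ j n, (xj j n)^2 ≤ K := fun j n => by
    rw [hKdef, le_div_iff₀ hα]; linarith [hKbd j n]
  have hK0 : 0 ≤ K := le_trans (sq_nonneg _) (hK2 0 0)
  intro k
  obtain ⟨Bk, hBk⟩ := hgbdd k
  obtain ⟨Dk, hDk⟩ := hβ k
  have hDk' : ∀ n, β n * ((n : ℝ) + 1) ^ k ≤ Dk := fun n => by
    have := hDk n; rwa [abs_of_nonneg (hβ0 n)] at this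
  have hDk0 : 0 ≤ Dk := le_trans (by positivity) (hDk 0)
  -- summability of the weighted g-series for each j
  have hgsum : ∀ j, Summable (fun n =>
      (a n * xj j n + deriv (f n) (xj j n))^2 * ((n:ℝ)+1)^(2*k)) := by
    intro j
    obtain ⟨C0, hC0⟩ := hxj j 0
    have hC0' : ∀ m, |xj j m| ≤ C0 := fun m => by simpa using hC0 m
    obtain ⟨Ck1, hCk1⟩ := hxj j (k+1)
    obtain ⟨Dk1, hDk1⟩ := hβ (k+1)
    have hDk1' : ∀ n, β n * ((n : ℝ) + 1) ^ (k+1) ≤ Dk1 := fun n => by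
      have := hDk1 n; rwa [abs_of_nonneg (hβ0 n)] at this
    set E := M * Ck1 + 5 * (1 + C0^2) * Dk1 with hE
    have hC00 : 0 ≤ C0 := le_trans (abs_nonneg _) (hC0' 0)
    have key : ∀ n, |a n * xj j n + deriv (f n) (xj j n)| * ((n:ℝ)+1)^(k+1) ≤ E := by
      intro n
      have hdb := deriv_bound (hC1 n) (hconv n) (hgrowth n) (xj j n)
      have habs : |a n * xj j n + deriv (f n) (xj j n)|
          ≤ M * |xj j n| + 5 * β n * (1 + C0^2) := by
        calc |a n * xj j n + deriv (f n) (xj j n)|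
            ≤ |a n * xj j n| + |deriv (f n) (xj j n)| := abs_add_le _ _
          _ = a n * |xj j n| + |deriv (f n) (xj j n)| := by
              rw [abs_mul, abs_of_pos (lt_of_lt_of_le hα (ha n).1)]
          _ ≤ M * |xj j n| + 5 * β n * (1 + (xj j n)^2) :=
              add_le_add (mul_le_mul_of_nonneg_right (ha n).2 (abs_nonneg _)) hdb
          _ ≤ M * |xj j n| + 5 * β n * (1 + C0^2) := by
              have h1 := hC0' n
              have hsq : (xj j n)^2 ≤ C0^2 := by
                nlinarith [sq_abs (xj j n), abs_nonneg (xj j n)]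
              nlinarith [mul_le_mul_of_nonneg_left hsq (hβ0 n)]
      have hp0 : (0:ℝ) ≤ ((n:ℝ)+1)^(k+1) := by positivity
      calc |a n * xj j n + deriv (f n) (xj j n)| * ((n:ℝ)+1)^(k+1)
          ≤ (M * |xj j n| + 5 * β n * (1 + C0^2)) * ((n:ℝ)+1)^(k+1) :=
            mul_le_mul_of_nonneg_right habs hp0
        _ = M * (|xj j n| * ((n:ℝ)+1)^(k+1))
            + 5 * (1 + C0^2) * (β n * ((n:ℝ)+1)^(k+1)) := by ring
        _ ≤ M * Ck1 + 5 * (1 + C0^2) * Dk1 := by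
            have h1 := hCk1 n
            have h2 := hDk1' n
            have h5 : (0:ℝ) ≤ 5 * (1 + C0^2) := by positivity
            nlinarith
    have hE0 : 0 ≤ E := le_trans (by positivity) (key 0)
    refine Summable.of_nonneg_of_le (fun n => by positivity) (fun n => ?_)
      (sumInv.mul_left (E^2))
    have hp : (0:ℝ) < ((n:ℝ)+1)^2 := by positivity
    rw [mul_one_div, le_div_iff₀ hp]
    have hq : (a n * xj j n + deriv (f n) (xj j n))^2 * ((n:ℝ)+1)^(2*k) * ((n:ℝ)+1)^2
        = (|a n * xj j n + deriv (f n) (xj j n)| * ((n:ℝ)+1)^(k+1))^2 := by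
      rw [mul_pow, sq_abs, ← pow_mul, mul_assoc, ← pow_add]
      ring_nf
    rw [hq]
    have h0 : 0 ≤ |a n * xj j n + deriv (f n) (xj j n)| * ((n:ℝ)+1)^(k+1) := by positivity
    exact pow_le_pow_left₀ h0 (key n) 2
  -- termwise bound on g
  have hgle : ∀ j n, |a n * xj j n + deriv (f n) (xj j n)| * ((n:ℝ)+1)^k ≤ Real.sqrt Bk := by
    intro j n
    refine Real.le_sqrt_of_sq_le ?_
    have ht := Summable.le_tsum (hgsum j) n (fun m _ => by positivity)
    have h2 : (a n * xj j n + deriv (f n) (xj j n))^2 * ((n:ℝ)+1)^(2*k) ≤ Bk :=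
      ht.trans (hBk j)
    calc (|a n * xj j n + deriv (f n) (xj j n)| * ((n:ℝ)+1)^k)^2
        = (a n * xj j n + deriv (f n) (xj j n))^2 * ((n:ℝ)+1)^(2*k) := by
          rw [mul_pow, sq_abs, ← pow_mul]
          congr 2
          ring
      _ ≤ Bk := h2
  refine ⟨(Real.sqrt Bk + 5*(1+K)*Dk)/α, fun j n => ?_⟩
  have hdb := deriv_bound (hC1 n) (hconv n) (hgrowth n) (xj j n)
  have hp0 : (0:ℝ) ≤ ((n:ℝ)+1)^k := by positivity
  have han : 0 < a n := lt_of_lt_of_le hα (ha n).1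
  rw [le_div_iff₀ hα]
  have hstep : α * (|xj j n| * ((n:ℝ)+1)^k)
      ≤ |a n * xj j n + deriv (f n) (xj j n)| * ((n:ℝ)+1)^k
        + |deriv (f n) (xj j n)| * ((n:ℝ)+1)^k := by
    have h1 : α * |xj j n| ≤ |a n * xj j n + deriv (f n) (xj j n)| + |deriv (f n) (xj j n)| := by
      have h2 : a n * |xj j n| = |a n * xj j n| := by
        rw [abs_mul, abs_of_pos han]
      have h3 : |a n * xj j n| ≤ |a n * xj j n + deriv (f n) (xj j n)| + |deriv (f n) (xj j n)| := by
        have := abs_add_le (a n * xj j n + deriv (f n) (xj j n)) (-(deriv (f n) (xj j n)))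
        simpa using this
      have h4 : α * |xj j n| ≤ a n * |xj j n| :=
        mul_le_mul_of_nonneg_right (ha n).1 (abs_nonneg _)
      linarith [h2 ▸ h3]
    calc α * (|xj j n| * ((n:ℝ)+1)^k) = (α * |xj j n|) * ((n:ℝ)+1)^k := by ring
      _ ≤ (|a n * xj j n + deriv (f n) (xj j n)| + |deriv (f n) (xj j n)|) * ((n:ℝ)+1)^k :=
          mul_le_mul_of_nonneg_right h1 hp0
      _ = _ := by ring
  have hder : |deriv (f n) (xj j n)| * ((n:ℝ)+1)^k ≤ 5*(1+K)*Dk := by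
    have h1 : |deriv (f n) (xj j n)| ≤ 5 * β n * (1 + K) := by
      have := hK2 j n
      have := hβ0 n
      nlinarith [hdb]
    calc |deriv (f n) (xj j n)| * ((n:ℝ)+1)^k ≤ (5 * β n * (1 + K)) * ((n:ℝ)+1)^k :=
          mul_le_mul_of_nonneg_right h1 hp0
      _ = 5 * (1+K) * (β n * ((n:ℝ)+1)^k) := by ring
      _ ≤ 5 * (1+K) * Dk := by
          have := hDk' n
          have h5 : (0:ℝ) ≤ 5 * (1+K) := by positivity
          nlinarith
  calc |xj j n| * ((n:ℝ)+1)^k * α = α * (|xj j n| * ((n:ℝ)+1)^k) := by ring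
    _ ≤ _ := hstep
    _ ≤ Real.sqrt Bk + 5*(1+K)*Dk := add_le_add (hgle j n) hder
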